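/- Suppose the weight m is FdB. Then m is almost submultiplicative if and only if α := inf_{n≥1} m_n^{1/n} > 0. -/

import Mathlib

lemma stmt7_aux {c x : ℝ} (hc : 0 < c) (hx : 0 < x) {n : ℕ} (hn : 1 ≤ n) :
    c ≤ x ^ (1 / (n : ℝ)) ↔ c ^ n ≤ x := by
  have hn' : (n : ℝ) ≠ 0 := by positivity
  constructor
  · intro h
    have h2 : c ^ n ≤ (x ^ (1 / (n : ℝ))) ^ n := pow_le_pow_left₀ hc.le h n
    rwa [← Real.rpow_natCast (x ^ (1 / (n : ℝ))) n, ← Real.rpow_mul hx.le,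
      one_div, inv_mul_cancel₀ hn', Real.rpow_one] at h2
  · intro h
    have h2 : (c ^ n) ^ (1 / (n : ℝ)) ≤ x ^ (1 / (n : ℝ)) :=
      Real.rpow_le_rpow (by positivity) h (by positivity)
    rwa [← Real.rpow_natCast c n, ← Real.rpow_mul hc.le,
      mul_one_div, div_self hn', Real.rpow_one] at h2

lemma stmt7_len_le_sum (ks : List ℕ) (h : ∀ i ∈ ks, 1 ≤ i) : ks.length ≤ ks.sum := by
  induction ks with
  | nil => simp
  | cons a t ih =>
    simp only [List.length_cons, List.sum_cons]
    have h1 := ih (fun i hi => h i (List.mem_cons_of_mem _ hi))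
    have h2 := h a List.mem_cons_self
    omega

/-- Suppose the weight `m` is FdB. Then `m` is almost submultiplicative iff
`inf_{n ≥ 1} m_n^{1/n} > 0`. -/
theorem stmt_7 (m : ℕ → ℝ) (hm : ∀ n, 1 ≤ n → 0 < m n)
    (hfdb : ∃ lam : ℝ, 1 ≤ lam ∧ ∀ ks : List ℕ, ks ≠ [] → (∀ i ∈ ks, 1 ≤ i) →
      m ks.length * (ks.map m).prod ≤ lam ^ ks.sum * m ks.sum) :
    (∃ lam : ℝ, 1 ≤ lam ∧ ∀ ks : List ℕ, ks ≠ [] → (∀ i ∈ ks, 1 ≤ i) →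
      (ks.map m).prod ≤ lam ^ ks.sum * m ks.sum)
    ↔ (∃ a : ℝ, 0 < a ∧ ∀ n, 1 ≤ n → a ≤ m n ^ (1 / (n : ℝ))) := by
  obtain ⟨lam, hlam, hf⟩ := hfdb
  have hm1 : 0 < m 1 := hm 1 le_rfl
  constructor
  · rintro ⟨μ, hμ, hμf⟩
    have hμ0 : 0 < μ := lt_of_lt_of_le one_pos hμ
    refine ⟨m 1 / μ, by positivity, ?_⟩
    intro n hn
    have h := hμf (List.replicate n 1) (by simp; omega) (by simp)
    simp only [List.map_replicate, List.prod_replicate, List.sum_replicate,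
      smul_eq_mul, mul_one] at h
    rw [stmt7_aux (by positivity) (hm n hn) hn, div_pow, div_le_iff₀ (by positivity)]
    linarith [h]
  · rintro ⟨a, ha, haf⟩
    set b := min a 1 with hb
    have hb0 : 0 < b := lt_min ha one_pos
    have hb1 : b ≤ 1 := min_le_right _ _
    refine ⟨lam / b, ?_, ?_⟩
    · rw [le_div_iff₀ hb0]; nlinarith
    · intro ks hne h1
      have hr : 1 ≤ ks.length := List.length_pos_iff.mpr hne
      have hk : ks.length ≤ ks.sum := stmt7_len_le_sum ks h1
      have hk1 : 1 ≤ ks.sum := le_trans hr hk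
      have hmr : 0 < m ks.length := hm _ hr
      have hmk : 0 < m ks.sum := hm _ hk1
      have key := hf ks hne h1
      have hbr : b ^ ks.sum ≤ m ks.length := by
        calc b ^ ks.sum ≤ b ^ ks.length := pow_le_pow_of_le_one hb0.le hb1 hk
          _ ≤ a ^ ks.length := pow_le_pow_left₀ hb0.le (min_le_left _ _) _
          _ ≤ m ks.length := (stmt7_aux ha hmr hr).mp (haf _ hr)
      have hprodnn : 0 ≤ (ks.map m).prod := by
        apply List.prod_nonneg
        intro x hx
        obtain ⟨i, hi, rfl⟩ := List.mem_map.mp hx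
        exact (hm i (h1 i hi)).le
      rw [div_pow, div_mul_eq_mul_div, le_div_iff₀ (by positivity)]
      calc (ks.map m).prod * b ^ ks.sum
          ≤ (ks.map m).prod * m ks.length :=
            mul_le_mul_of_nonneg_left hbr hprodnn
        _ = m ks.length * (ks.map m).prod := mul_comm _ _
        _ ≤ lam ^ ks.sum * m ks.sum := key
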